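/- arXiv:2012.05601 — 2 statements merged into one kernel-verified Lean document; each statement's English description precedes it below -/
import Mathlib

section
/- For the rotated hyperbolic cocycle over the full 2-shift: λ_+(A_{(0,0)}, ν) = log((3+√5)/2), and there is ε_0 > 0 such that for every 0 < ε ≤ ε_0 and every θ ∈ [−ε,ε]² with θ ≠ (0,0), one has λ_+(A_θ, ν) < λ_+(A_{(0,0)}, ν). -/
open MeasureTheory Filter Topology

attribute [local instance] Classical.propDecidable

noncomputable section

namespace PaperBGI

/-- The full one-sided shift space on `q` symbols. -/
abbrev FS (q : ℕ) := ℕ → Fin q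

/-- The left shift map. -/
def shift {q : ℕ} (x : FS q) : FS q := fun n => x (n + 1)

/-- The `n`-cylinder of `x`. -/
def cyl {q : ℕ} (x : FS q) (n : ℕ) : Set (FS q) := {z | ∀ j < n, z j = x j}

/-- `d(x,z) = (1/2)^{min{ n : x_n ≠ z_n }}` (and `0` if `x = z`). -/
def sdist {q : ℕ} (x z : FS q) : ℝ :=
  if h : ∃ n, x n ≠ z n then (1 / 2 : ℝ) ^ Nat.find h else 0

/-- Birkhoff sums along the shift. -/
def birk {q : ℕ} (f : FS q → ℝ) (n : ℕ) (x : FS q) : ℝ :=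
  ∑ j ∈ Finset.range n, f (shift^[j] x)

/-- Prepending a symbol to a sequence. -/
def cons {q : ℕ} (i : Fin q) (x : FS q) : FS q := fun n =>
  match n with
  | 0 => i
  | m + 1 => x m

/-- The subshift of finite type with transition matrix `M`. -/
def sftSet {q : ℕ} (M : Fin q → Fin q → Bool) : Set (FS q) :=
  {x | ∀ n, M (x n) (x (n + 1)) = true}

/-- Transitivity (irreducibility) of the transition matrix `M`. -/
def IsIrreducible {q : ℕ} (M : Fin q → Fin q → Bool) : Prop :=
  ∀ a c : Fin q, ∃ n, 0 < n ∧ ∃ p : ℕ → Fin q, p 0 = a ∧ p n = c ∧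
    ∀ i < n, M (p i) (p (i + 1)) = true

/-- Lipschitz continuity with respect to `sdist`. -/
def LipSh {q : ℕ} (f : FS q → ℝ) : Prop :=
  ∃ L : ℝ, 0 ≤ L ∧ ∀ x z, |f x - f z| ≤ L * sdist x z

/-- Lipschitz-norm distance between two functions. -/
def dLip {q : ℕ} (f g : FS q → ℝ) : ℝ :=
  (⨆ x : FS q, |f x - g x|) +
    ⨆ p : FS q × FS q,
      if p.1 = p.2 then 0 else |f p.1 - g p.1 - (f p.2 - g p.2)| / sdist p.1 p.2

/-- `J` is a (positive) normalized Jacobian on `Ω`. -/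
def Normalized {q : ℕ} (Ω : Set (FS q)) (J : FS q → ℝ) : Prop :=
  (∀ x, 0 < J x) ∧ ∀ x ∈ Ω, (∑ i : Fin q, if cons i x ∈ Ω then J (cons i x) else 0) = 1

/-- The Gibbs property (at zero pressure) w.r.t. the normalized potential `log J`. -/
def IsGibbs {q : ℕ} (Ω : Set (FS q)) (J : FS q → ℝ) (K : ℝ) (μ : Measure (FS q)) : Prop :=
  ∀ x ∈ Ω, ∀ n : ℕ, 1 ≤ n →
    K⁻¹ ≤ (μ (cyl x n)).toReal / Real.exp (birk (fun z => Real.log (J z)) n x) ∧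
      (μ (cyl x n)).toReal / Real.exp (birk (fun z => Real.log (J z)) n x) ≤ K

/-- The parameter box `Θ = [a₁,b₁] × ⋯ × [a_k,b_k]`. -/
def box {k : ℕ} (a b : Fin k → ℝ) : Set (Fin k → ℝ) :=
  Set.univ.pi fun i => Set.Icc (a i) (b i)

/-- Hypothesis A: `P₀` has a continuous strictly positive density on `Θ`. -/
def HypA {k : ℕ} (Θ : Set (Fin k → ℝ)) (P₀ : Measure (Fin k → ℝ)) : Prop :=
  IsProbabilityMeasure P₀ ∧
    ∃ ρ : (Fin k → ℝ) → ℝ, ContinuousOn ρ Θ ∧ (∀ θ ∈ Θ, 0 < ρ θ) ∧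
      P₀ = (volume.restrict Θ).withDensity fun θ => ENNReal.ofReal (ρ θ)

/-- The setting of parameterized Gibbs direct observation. -/
structure Setting (q k : ℕ) where
  /-- transition matrix of the subshift of finite type -/
  M : Fin q → Fin q → Bool
  irr : IsIrreducible M
  a : Fin k → ℝ
  b : Fin k → ℝ
  hab : ∀ i, a i ≤ b i
  /-- the parameterized family of Jacobians -/
  J : (Fin k → ℝ) → FS q → ℝ
  /-- the parameterized family of Gibbs measures -/
  μ : (Fin k → ℝ) → Measure (FS q)
  K : ℝ
  hK : 1 < K
  lip : ∀ θ ∈ box a b, LipSh fun x => Real.log (J θ x)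
  norm : ∀ θ ∈ box a b, Normalized (sftSet M) (J θ)
  contJ : ∀ θ' ∈ box a b, ∀ ε > (0 : ℝ), ∃ δ > (0 : ℝ), ∀ θ ∈ box a b, dist θ θ' < δ →
      dLip (fun x => Real.log (J θ x)) (fun x => Real.log (J θ' x)) < ε
  embJ : ∀ θ' ∈ box a b, ∀ ε > (0 : ℝ), ∃ δ > (0 : ℝ), ∀ θ ∈ box a b,
      dLip (fun x => Real.log (J θ x)) (fun x => Real.log (J θ' x)) < δ → dist θ θ' < ε
  injJ : Set.InjOn J (box a b)
  prob : ∀ θ ∈ box a b, IsProbabilityMeasure (μ θ)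
  erg : ∀ θ ∈ box a b, Ergodic (shift (q := q)) (μ θ)
  supp : ∀ θ ∈ box a b, μ θ (sftSet M) = 1
  gibbs : ∀ θ ∈ box a b, IsGibbs (sftSet M) (J θ) K (μ θ)
  uniq : ∀ θ ∈ box a b, ∀ ν : Measure (FS q), IsProbabilityMeasure ν → ν.map shift = ν →
      ν (sftSet M) = 1 → (∃ K' > (1 : ℝ), IsGibbs (sftSet M) (J θ) K' ν) → ν = μ θ
  measμ : ∀ (y : FS q) (n : ℕ), Measurable fun θ => μ θ (cyl y n)

/-- Relative entropy `h(μ_{θ₀} | μ_θ) = ∫ log (J_{θ₀}/J_θ) dμ_{θ₀}`. -/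
def relEnt {q k : ℕ} (S : Setting q k) (θ₀ θ : Fin k → ℝ) : ℝ :=
  ∫ x, Real.log (S.J θ₀ x / S.J θ x) ∂(S.μ θ₀)

/-- The `δ`-ball around `θ₀` inside `Θ`. -/
def pball {k : ℕ} (Θ : Set (Fin k → ℝ)) (θ₀ : Fin k → ℝ) (δ : ℝ) : Set (Fin k → ℝ) :=
  {θ ∈ Θ | dist θ θ₀ < δ}

end PaperBGI

namespace PaperBGI

/-- Operator norm of a `2×2` real matrix acting on Euclidean space. -/
def opNorm (A : Matrix (Fin 2) (Fin 2) ℝ) : ℝ :=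
  ‖LinearMap.toContinuousLinearMap (Matrix.toEuclideanLin A)‖

/-- The hyperbolic matrix `M = [[2,1],[1,1]]`. -/
def hypMat : Matrix (Fin 2) (Fin 2) ℝ := !![2, 1; 1, 1]

/-- The rotation matrix of angle `t`. -/
def rotMat (t : ℝ) : Matrix (Fin 2) (Fin 2) ℝ :=
  !![Real.cos t, -Real.sin t; Real.sin t, Real.cos t]

/-- The rotated cocycle: `A_θ(x) = M · R_{θ_{x₁}}` depends only on the first symbol. -/
def rotCocycle (θ : Fin 2 → ℝ) (x : FS 2) : Matrix (Fin 2) (Fin 2) ℝ :=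
  hypMat * rotMat (θ (x 0))

/-- Products of a matrix cocycle: `A^{(n)}(x) = A(σ^{n−1}x) ⋯ A(σx) A(x)`. -/
def cocycleProd (A : FS 2 → Matrix (Fin 2) (Fin 2) ℝ) : ℕ → FS 2 → Matrix (Fin 2) (Fin 2) ℝ
  | 0, _ => 1
  | n + 1, x => cocycleProd A n (shift x) * A x

/-- The top Lyapunov exponent `λ_+(A_θ, ν) = inf_{n ≥ 1} (1/n) ∫ log ‖A_θ^{(n)}‖ dν`. -/
def lyap (ν : Measure (FS 2)) (θ : Fin 2 → ℝ) : ℝ :=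
  ⨅ n : ℕ, (1 / (n + 1 : ℝ)) *
    ∫ x, Real.log (opNorm (cocycleProd (rotCocycle θ) (n + 1) x)) ∂ν

abbrev E2 := EuclideanSpace ℝ (Fin 2)

lemma opNorm_nonneg (A : Matrix (Fin 2) (Fin 2) ℝ) : 0 ≤ opNorm A := norm_nonneg _

lemma toCLM_apply (A : Matrix (Fin 2) (Fin 2) ℝ) (x : E2) :
    (LinearMap.toContinuousLinearMap (Matrix.toEuclideanLin A)) x
      = (WithLp.equiv 2 (Fin 2 → ℝ)).symm (A.mulVec ((WithLp.equiv 2 (Fin 2 → ℝ)) x)) := rfl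

lemma norm_symm (v : Fin 2 → ℝ) :
    ‖(WithLp.equiv 2 (Fin 2 → ℝ)).symm v‖ = Real.sqrt ((v 0)^2 + (v 1)^2) := by
  rw [EuclideanSpace.norm_eq]
  simp [Fin.sum_univ_two, sq_abs, sq]

lemma opNorm_le_of {A : Matrix (Fin 2) (Fin 2) ℝ} {c : ℝ} (hc : 0 ≤ c)
    (h : ∀ v : Fin 2 → ℝ, Real.sqrt ((A.mulVec v 0)^2 + (A.mulVec v 1)^2)
      ≤ c * Real.sqrt ((v 0)^2 + (v 1)^2)) : opNorm A ≤ c := by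
  apply ContinuousLinearMap.opNorm_le_bound _ hc
  intro x
  rw [toCLM_apply, norm_symm]
  have : ‖x‖ = Real.sqrt ((((WithLp.equiv 2 (Fin 2 → ℝ)) x) 0)^2 + (((WithLp.equiv 2 (Fin 2 → ℝ)) x) 1)^2) := by
    rw [← norm_symm]; simp
  rw [this]
  exact h _

lemma le_opNorm (A : Matrix (Fin 2) (Fin 2) ℝ) (v : Fin 2 → ℝ) :
    Real.sqrt ((A.mulVec v 0)^2 + (A.mulVec v 1)^2) ≤ opNorm A * Real.sqrt ((v 0)^2 + (v 1)^2) := by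
  have := (LinearMap.toContinuousLinearMap (Matrix.toEuclideanLin A)).le_opNorm
    ((WithLp.equiv 2 (Fin 2 → ℝ)).symm v)
  rw [toCLM_apply, norm_symm] at this
  rw [norm_symm] at this; exact this

lemma opNorm_mul_le (A B : Matrix (Fin 2) (Fin 2) ℝ) :
    opNorm (A * B) ≤ opNorm A * opNorm B := by
  have : (LinearMap.toContinuousLinearMap (Matrix.toEuclideanLin (A * B)))
      = (LinearMap.toContinuousLinearMap (Matrix.toEuclideanLin A)).comp
        (LinearMap.toContinuousLinearMap (Matrix.toEuclideanLin B)) := by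
    ext x
    simp only [ContinuousLinearMap.coe_comp', Function.comp_apply, toCLM_apply]
    simp [Matrix.toEuclideanLin_apply, ← Matrix.mulVec_mulVec]
  rw [opNorm, this]
  exact ContinuousLinearMap.opNorm_comp_le _ _



lemma quadform (g00 g01 g11 X Y : ℝ) (hdet : g00*g11 - g01^2 = 1) (hs : 2 ≤ g00 + g11) :
    g00*X^2 + 2*g01*X*Y + g11*Y^2 ≤ ((g00+g11) + Real.sqrt ((g00+g11)^2 - 4))/2 * (X^2+Y^2) := by
  set f := g00 + g11 with hf
  set d := Real.sqrt (f^2 - 4) with hdd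
  have hd0 : 0 ≤ d := Real.sqrt_nonneg _
  have hd : d^2 = f^2 - 4 := Real.sq_sqrt (by nlinarith)
  set r := (f + d)/2 with hr
  have h1 : (r - g00) + (r - g11) = d := by rw [hr, hf]; ring
  have h2 : (r - g00) * (r - g11) = g01^2 := by rw [hr, hf]; nlinarith [hd]
  have h3 : 0 ≤ r - g00 := by nlinarith [sq_nonneg g01]
  have h4 : 0 ≤ r - g11 := by nlinarith [sq_nonneg g01]
  set p := Real.sqrt (r - g00) with hpp
  set q := Real.sqrt (r - g11) with hqq
  set a := |g01| with ha
  set A := |X| with hA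
  set B := |Y| with hB
  have hpq : p * q = a := by rw [hpp, hqq, ha, ← Real.sqrt_mul h3, h2, Real.sqrt_sq_eq_abs]
  have hp : p^2 = r - g00 := Real.sq_sqrt h3
  have hq : q^2 = r - g11 := Real.sq_sqrt h4
  have h7 : A^2 = X^2 := sq_abs X
  have h8 : B^2 = Y^2 := sq_abs Y
  have h6 : g01 * (X * Y) ≤ a * (A * B) := by
    calc g01 * (X*Y) ≤ |g01 * (X*Y)| := le_abs_self _
    _ = a * (A * B) := by rw [abs_mul, abs_mul]
  have h5 := sq_nonneg (p * A - q * B)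
  have h9 : (p * A - q * B)^2 = (r - g00)*X^2 + (r - g11)*Y^2 - 2*(a*(A*B)) := by
    have e : (p * A - q * B)^2 = p^2*A^2 - 2*(p*q)*(A*B) + q^2*B^2 := by ring
    rw [e, hpq, hp, hq, h7, h8]; ring
  rw [h9] at h5
  nlinarith [h5, h6]



lemma mulVec_zero' (B : Matrix (Fin 2) (Fin 2) ℝ) (v : Fin 2 → ℝ) :
    B.mulVec v 0 = B 0 0 * v 0 + B 0 1 * v 1 := by
  simp [Matrix.mulVec, dotProduct, Fin.sum_univ_two]

lemma mulVec_one' (B : Matrix (Fin 2) (Fin 2) ℝ) (v : Fin 2 → ℝ) :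
    B.mulVec v 1 = B 1 0 * v 0 + B 1 1 * v 1 := by
  simp [Matrix.mulVec, dotProduct, Fin.sum_univ_two]

def fB (B : Matrix (Fin 2) (Fin 2) ℝ) : ℝ := B 0 0^2 + B 0 1^2 + B 1 0^2 + B 1 1^2

def rB (B : Matrix (Fin 2) (Fin 2) ℝ) : ℝ := (fB B + Real.sqrt ((fB B)^2 - 4))/2

lemma det_eq (B : Matrix (Fin 2) (Fin 2) ℝ) (h : B.det = 1) :
    B 0 0 * B 1 1 - B 0 1 * B 1 0 = 1 := by rwa [Matrix.det_fin_two] at h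

lemma fB_ge_two {B : Matrix (Fin 2) (Fin 2) ℝ} (h : B.det = 1) : 2 ≤ fB B := by
  have := det_eq B h
  unfold fB
  nlinarith [sq_nonneg (B 0 0 - B 1 1), sq_nonneg (B 0 1 + B 1 0)]

lemma one_le_rB {B : Matrix (Fin 2) (Fin 2) ℝ} (h : B.det = 1) : 1 ≤ rB B := by
  have h2 := fB_ge_two h
  have := Real.sqrt_nonneg ((fB B)^2 - 4)
  unfold rB; linarith

lemma rB_le_fB {B : Matrix (Fin 2) (Fin 2) ℝ} (h : B.det = 1) : rB B ≤ fB B := by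
  have h2 := fB_ge_two h
  have : Real.sqrt ((fB B)^2 - 4) ≤ fB B := by
    calc Real.sqrt ((fB B)^2 - 4) ≤ Real.sqrt ((fB B)^2) := by
          apply Real.sqrt_le_sqrt; linarith
    _ = fB B := by rw [Real.sqrt_sq (by linarith)]
  unfold rB; linarith

lemma opNorm_le_sqrt_rB {B : Matrix (Fin 2) (Fin 2) ℝ} (h : B.det = 1) :
    opNorm B ≤ Real.sqrt (rB B) := by
  apply opNorm_le_of (Real.sqrt_nonneg _)
  intro v
  rw [mulVec_zero', mulVec_one']
  have key : (B 0 0 * v 0 + B 0 1 * v 1)^2 + (B 1 0 * v 0 + B 1 1 * v 1)^2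
      ≤ rB B * ((v 0)^2 + (v 1)^2) := by
    have hd := det_eq B h
    have hdet' : (B 0 0^2 + B 1 0^2) * (B 0 1^2 + B 1 1^2)
        - (B 0 0 * B 0 1 + B 1 0 * B 1 1)^2 = 1 := by nlinarith [hd]
    have hs : 2 ≤ (B 0 0^2 + B 1 0^2) + (B 0 1^2 + B 1 1^2) := by
      have := fB_ge_two h; unfold fB at this; linarith
    have q := quadform (B 0 0^2 + B 1 0^2) (B 0 0 * B 0 1 + B 1 0 * B 1 1)
      (B 0 1^2 + B 1 1^2) (v 0) (v 1) hdet' hs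
    have e1 : (B 0 0 * v 0 + B 0 1 * v 1)^2 + (B 1 0 * v 0 + B 1 1 * v 1)^2
        = (B 0 0^2 + B 1 0^2)*(v 0)^2
          + 2*(B 0 0 * B 0 1 + B 1 0 * B 1 1)*(v 0)*(v 1)
          + (B 0 1^2 + B 1 1^2)*(v 1)^2 := by ring
    have e2 : ((B 0 0^2 + B 1 0^2) + (B 0 1^2 + B 1 1^2)) = fB B := by unfold fB; ring
    rw [e1]
    calc _ ≤ _ := q
    _ = rB B * ((v 0)^2 + (v 1)^2) := by rw [e2]; rfl
  calc Real.sqrt ((B 0 0 * v 0 + B 0 1 * v 1)^2 + (B 1 0 * v 0 + B 1 1 * v 1)^2)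
      ≤ Real.sqrt (rB B * ((v 0)^2 + (v 1)^2)) := Real.sqrt_le_sqrt key
  _ = Real.sqrt (rB B) * Real.sqrt ((v 0)^2 + (v 1)^2) := by
      rw [Real.sqrt_mul (by linarith [one_le_rB h])]

lemma opNorm_sq_le_rB {B : Matrix (Fin 2) (Fin 2) ℝ} (h : B.det = 1) :
    opNorm B ^ 2 ≤ rB B := by
  have h1 := opNorm_le_sqrt_rB h
  have h2 : (Real.sqrt (rB B))^2 = rB B := Real.sq_sqrt (by linarith [one_le_rB h])
  nlinarith [opNorm_nonneg B, h1, h2]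

lemma one_le_opNorm {B : Matrix (Fin 2) (Fin 2) ℝ} (h : B.det = 1) : 1 ≤ opNorm B := by
  have hf := fB_ge_two h
  have key : ∀ v : Fin 2 → ℝ, (v 0)^2 + (v 1)^2 = 1 →
      Real.sqrt ((B.mulVec v 0)^2 + (B.mulVec v 1)^2) ≤ opNorm B := by
    intro v hv
    have := le_opNorm B v
    rw [hv, Real.sqrt_one, mul_one] at this
    exact this
  have h0 := key ![1, 0] (by norm_num)
  have h1 := key ![0, 1] (by norm_num)
  rw [mulVec_zero', mulVec_one'] at h0 h1
  simp only [Matrix.cons_val_zero, Matrix.cons_val_one, Matrix.head_cons] at h0 h1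
  rcases le_total 1 (B 0 0^2 + B 1 0^2) with hc | hc
  · calc (1:ℝ) = Real.sqrt 1 := Real.sqrt_one.symm
    _ ≤ Real.sqrt (B 0 0^2 + B 1 0^2) := Real.sqrt_le_sqrt hc
    _ ≤ opNorm B := by convert h0 using 2; ring
  · have hc1 : 1 ≤ B 0 1^2 + B 1 1^2 := by unfold fB at hf; linarith
    calc (1:ℝ) = Real.sqrt 1 := Real.sqrt_one.symm
    _ ≤ Real.sqrt (B 0 1^2 + B 1 1^2) := Real.sqrt_le_sqrt hc1
    _ ≤ opNorm B := by convert h1 using 2; ring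



def lam : ℝ := (3 + Real.sqrt 5)/2

lemma s5_sq : Real.sqrt 5 ^ 2 = 5 := Real.sq_sqrt (by norm_num)
lemma s5_gt : 2 < Real.sqrt 5 := by
  nlinarith [s5_sq, Real.sqrt_nonneg 5]
lemma s5_lt : Real.sqrt 5 < 3 := by nlinarith [s5_sq, Real.sqrt_nonneg 5]
lemma lam_gt_one : 1 < lam := by unfold lam; nlinarith [s5_gt]
lemma lam_ge_two : 2 ≤ lam := by unfold lam; nlinarith [s5_gt]
lemma lam_le_three : lam ≤ 3 := by unfold lam; nlinarith [s5_lt]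
lemma lam_sq : lam^2 = 3*lam - 1 := by unfold lam; nlinarith [s5_sq]
lemma lam_pos : 0 < lam := lt_trans one_pos lam_gt_one

lemma det_hypMat : hypMat.det = 1 := by rw [hypMat, Matrix.det_fin_two_of]; norm_num
lemma det_rotMat (t : ℝ) : (rotMat t).det = 1 := by
  rw [rotMat, Matrix.det_fin_two_of]
  have := Real.sin_sq_add_cos_sq t
  nlinarith [this]

lemma Mpow (k : ℕ) : ∃ a b c : ℝ, hypMat^k = !![a, b; b, c] ∧ 0 ≤ b ∧ 0 ≤ c ∧
    a = b + c ∧ b ≤ (lam - 2)*a ∧ a ≤ lam^k := by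
  induction k with
  | zero =>
    refine ⟨1, 0, 1, ?_, by norm_num, by norm_num, by norm_num, by nlinarith [lam_ge_two], by norm_num⟩
    rw [pow_zero]
    exact Matrix.one_fin_two
  | succ k ih =>
    obtain ⟨a, b, c, hM, hb, hc, habc, hba, halam⟩ := ih
    have ha : 0 ≤ a := by rw [habc]; linarith
    refine ⟨2*a + b, a + b, a, ?_, by linarith, ha, by ring, ?_, ?_⟩
    · rw [pow_succ, hM, hypMat, Matrix.mul_fin_two]
      rw [show a*2+b*1 = 2*a+b from by ring, show a*1+b*1 = a+b from by ring,
        show b*2+c*1 = a+b from by rw [habc]; ring, show b*1+c*1 = a from by rw [habc]; ring]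
    · nlinarith [lam_sq, lam_ge_two]
    · have : 2*a + b ≤ lam * a := by nlinarith
      calc 2*a+b ≤ lam * a := this
      _ ≤ lam * lam^k := by nlinarith [lam_pos]
      _ = lam^(k+1) := by rw [pow_succ]; ring

lemma opNorm_Mpow_le (k : ℕ) : opNorm (hypMat^k) ≤ 2 * lam^k := by
  obtain ⟨a, b, c, hM, hb, hc, habc, hba, halam⟩ := Mpow k
  have ha : 0 ≤ a := by rw [habc]; linarith
  have hlamk : (0:ℝ) < lam^k := pow_pos lam_pos k
  apply opNorm_le_of (by positivity)
  intro v
  rw [mulVec_zero', mulVec_one', hM]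
  norm_num
  have hca : c ≤ a := by linarith [habc]
  have hba' : b ≤ a := by nlinarith [lam_le_three]
  have hS : (0:ℝ) ≤ (v 0)^2 + (v 1)^2 := by positivity
  have h1 : (a * v 0 + b * v 1)^2 ≤ (a^2+b^2) * ((v 0)^2 + (v 1)^2) := by
    nlinarith [sq_nonneg (a * v 1 - b * v 0)]
  have h2 : (b * v 0 + c * v 1)^2 ≤ (b^2+c^2) * ((v 0)^2 + (v 1)^2) := by
    nlinarith [sq_nonneg (b * v 1 - c * v 0)]
  have ha2 : a^2 ≤ (lam^k)^2 := by nlinarith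
  have hb2 : b^2 ≤ (lam^k)^2 := by nlinarith
  have hc2 : c^2 ≤ (lam^k)^2 := by nlinarith
  have hcoef : a^2+b^2 + (b^2+c^2) ≤ 4*(lam^k)^2 := by linarith
  have key : (a * v 0 + b * v 1)^2 + (b * v 0 + c * v 1)^2
      ≤ (2*lam^k)^2 * ((v 0)^2 + (v 1)^2) := by
    nlinarith [h1, h2, hS, mul_le_mul_of_nonneg_right hcoef hS]
  calc Real.sqrt ((a * v 0 + b * v 1)^2 + (b * v 0 + c * v 1)^2)
      ≤ Real.sqrt ((2*lam^k)^2 * ((v 0)^2 + (v 1)^2)) := Real.sqrt_le_sqrt key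
  _ = (2*lam^k) * Real.sqrt ((v 0)^2 + (v 1)^2) := by
      rw [Real.sqrt_mul (by positivity), Real.sqrt_sq (by positivity)]

lemma Mpow_eigen (k : ℕ) :
    (hypMat^k).mulVec ![2, Real.sqrt 5 - 1] = fun i => lam^k * (![2, Real.sqrt 5 - 1] i) := by
  induction k with
  | zero => funext i; rw [pow_zero, Matrix.one_mulVec]; simp
  | succ k ih =>
    have e00 : hypMat 0 0 = 2 := by norm_num [hypMat]
    have e01 : hypMat 0 1 = 1 := by norm_num [hypMat]
    have e10 : hypMat 1 0 = 1 := by norm_num [hypMat]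
    have e11 : hypMat 1 1 = 1 := by norm_num [hypMat]
    have g0 : hypMat.mulVec ![2, Real.sqrt 5 - 1] 0 = lam * (![2, Real.sqrt 5 - 1] 0) := by
      rw [mulVec_zero', e00, e01]
      simp only [Matrix.cons_val_zero, Matrix.cons_val_one, Matrix.head_cons]
      rw [lam]; ring
    have g1 : hypMat.mulVec ![2, Real.sqrt 5 - 1] 1 = lam * (![2, Real.sqrt 5 - 1] 1) := by
      rw [mulVec_one', e10, e11]
      simp only [Matrix.cons_val_zero, Matrix.cons_val_one, Matrix.head_cons]
      rw [lam]
      linear_combination (-1/2 : ℝ) * s5_sq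
    have step : hypMat.mulVec ![2, Real.sqrt 5 - 1] = fun i => lam * (![2, Real.sqrt 5 - 1] i) := by
      funext i
      fin_cases i
      · exact g0
      · exact g1
    funext i
    rw [pow_succ', ← Matrix.mulVec_mulVec, ih]
    have : (fun i => lam^k * (![2, Real.sqrt 5 - 1] i)) = lam^k • ![2, Real.sqrt 5 - 1] := by
      funext j; simp
    rw [this, Matrix.mulVec_smul, step]
    simp [pow_succ]
    ring

lemma le_opNorm_Mpow (k : ℕ) : lam^k ≤ opNorm (hypMat^k) := by
  have h := le_opNorm (hypMat^k) ![2, Real.sqrt 5 - 1]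
  rw [Mpow_eigen k] at h
  have hlamk : (0:ℝ) < lam^k := pow_pos lam_pos k
  have hnv : (0:ℝ) < Real.sqrt ((2:ℝ)^2 + (Real.sqrt 5 - 1)^2) := by
    apply Real.sqrt_pos.2; nlinarith [sq_nonneg (Real.sqrt 5 - 1)]
  have e : Real.sqrt ((lam^k * ![2, Real.sqrt 5 - 1] 0)^2 + (lam^k * ![2, Real.sqrt 5 - 1] 1)^2)
      = lam^k * Real.sqrt ((2:ℝ)^2 + (Real.sqrt 5 - 1)^2) := by
    simp only [Matrix.cons_val_zero, Matrix.cons_val_one, Matrix.head_cons]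
    rw [show (lam^k * 2)^2 + (lam^k * (Real.sqrt 5 - 1))^2
        = (lam^k)^2 * ((2:ℝ)^2 + (Real.sqrt 5 - 1)^2) by ring]
    rw [Real.sqrt_mul (by positivity), Real.sqrt_sq (by positivity)]
  rw [e] at h
  have e2 : Real.sqrt ((![2, Real.sqrt 5 - 1] 0)^2 + (![2, Real.sqrt 5 - 1] 1)^2)
      = Real.sqrt ((2:ℝ)^2 + (Real.sqrt 5 - 1)^2) := by norm_num
  rw [e2] at h
  exact le_of_mul_le_mul_right (by linarith [h]) hnv



lemma det_MRM (t : ℝ) : (hypMat * rotMat t * hypMat).det = 1 := by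
  rw [Matrix.det_mul, Matrix.det_mul, det_hypMat, det_rotMat]; ring

lemma MRM_eq (t : ℝ) : hypMat * rotMat t * hypMat
    = !![5 * Real.cos t, 3 * Real.cos t - Real.sin t;
         3 * Real.cos t + Real.sin t, 2 * Real.cos t] := by
  rw [hypMat, rotMat, Matrix.mul_fin_two, Matrix.mul_fin_two]
  congr 1 <;> ring_nf

lemma fB_MRM (t : ℝ) : fB (hypMat * rotMat t * hypMat) = 2 + 45 * Real.cos t ^ 2 := by
  rw [MRM_eq, fB]
  simp only [Matrix.cons_val_zero, Matrix.cons_val_one, Matrix.head_cons, Matrix.cons_val',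
    Matrix.head_fin_const, Matrix.empty_val', Matrix.cons_val_fin_one, Matrix.of_apply]
  have := Real.sin_sq_add_cos_sq t
  nlinarith [this]

lemma lam4 : lam^2 * lam^2 = (47 + 21 * Real.sqrt 5)/2 := by
  rw [lam]; linear_combination ((Real.sqrt 5 ^2 + 12 * Real.sqrt 5 + 59)/16) * s5_sq

lemma sqrt2205 : Real.sqrt (47^2 - 4) = 21 * Real.sqrt 5 := by
  rw [show ((47:ℝ)^2 - 4) = (21 * Real.sqrt 5)^2 from by linear_combination (-441:ℝ) * s5_sq]
  exact Real.sqrt_sq (by positivity)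

lemma rB_le_of_fB_le {B : Matrix (Fin 2) (Fin 2) ℝ} (h : B.det = 1) (hf : fB B ≤ 47) :
    rB B ≤ lam^2 * lam^2 := by
  have h2 := fB_ge_two h
  have : Real.sqrt ((fB B)^2 - 4) ≤ Real.sqrt (47^2 - 4) := by
    apply Real.sqrt_le_sqrt; nlinarith
  rw [sqrt2205] at this
  rw [rB, lam4]; linarith

lemma rB_lt_of_fB_lt {B : Matrix (Fin 2) (Fin 2) ℝ} (h : B.det = 1) (hf : fB B < 47) :
    rB B < lam^2 * lam^2 := by
  have h2 := fB_ge_two h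
  have : Real.sqrt ((fB B)^2 - 4) ≤ Real.sqrt (47^2 - 4) := by
    apply Real.sqrt_le_sqrt; nlinarith
  rw [sqrt2205] at this
  rw [rB, lam4]; linarith

lemma opNorm_MRM_le (t : ℝ) : opNorm (hypMat * rotMat t * hypMat) ≤ lam^2 := by
  have h1 := opNorm_sq_le_rB (det_MRM t)
  have h2 : fB (hypMat * rotMat t * hypMat) ≤ 47 := by
    rw [fB_MRM]; nlinarith [Real.cos_sq_le_one t]
  have h3 := rB_le_of_fB_le (det_MRM t) h2
  nlinarith [opNorm_nonneg (hypMat * rotMat t * hypMat), sq_nonneg lam, lam_pos]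

lemma opNorm_MRM_lt {t : ℝ} (h : Real.cos t ^ 2 < 1) :
    opNorm (hypMat * rotMat t * hypMat) < lam^2 := by
  have h1 := opNorm_sq_le_rB (det_MRM t)
  have h2 : fB (hypMat * rotMat t * hypMat) < 47 := by rw [fB_MRM]; nlinarith
  have h3 := rB_lt_of_fB_lt (det_MRM t) h2
  nlinarith [opNorm_nonneg (hypMat * rotMat t * hypMat), sq_nonneg lam, lam_pos]

lemma cos_sq_lt_one {t : ℝ} (h0 : t ≠ 0) (h1 : |t| ≤ 1) : Real.cos t ^ 2 < 1 := by
  have hpi := Real.pi_gt_three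
  have habs := abs_le.1 h1
  have hc1 : Real.cos t < 1 := by
    rcases lt_or_eq_of_le (Real.cos_le_one t) with h | h
    · exact h
    · exfalso
      have := (Real.cos_eq_one_iff_of_lt_of_lt (x := t) (by linarith) (by linarith)).1 h
      exact h0 this
  have hc0 : 0 < Real.cos t := Real.cos_pos_of_mem_Ioo ⟨by linarith, by linarith⟩
  nlinarith

lemma opNorm_rot_le_one (t : ℝ) : opNorm (rotMat t) ≤ 1 := by
  apply opNorm_le_of zero_le_one
  intro v
  rw [mulVec_zero', mulVec_one', one_mul]
  have e : ((rotMat t) 0 0 * v 0 + (rotMat t) 0 1 * v 1)^2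
      + ((rotMat t) 1 0 * v 0 + (rotMat t) 1 1 * v 1)^2 = (v 0)^2 + (v 1)^2 := by
    rw [rotMat]
    simp only [Matrix.cons_val_zero, Matrix.cons_val_one, Matrix.head_cons, Matrix.cons_val',
      Matrix.head_fin_const, Matrix.empty_val', Matrix.cons_val_fin_one, Matrix.of_apply]
    nlinarith [Real.sin_sq_add_cos_sq t]
  rw [e]

lemma opNorm_hyp_le_three : opNorm hypMat ≤ 3 := by
  apply opNorm_le_of (by norm_num)
  intro v
  rw [mulVec_zero', mulVec_one']
  have e00 : hypMat 0 0 = 2 := by norm_num [hypMat]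
  have e01 : hypMat 0 1 = 1 := by norm_num [hypMat]
  have e10 : hypMat 1 0 = 1 := by norm_num [hypMat]
  have e11 : hypMat 1 1 = 1 := by norm_num [hypMat]
  rw [e00, e01, e10, e11]
  have key : (2 * v 0 + 1 * v 1)^2 + (1 * v 0 + 1 * v 1)^2 ≤ 3^2 * ((v 0)^2 + (v 1)^2) := by
    nlinarith [sq_nonneg (v 0 - v 1), sq_nonneg (v 0 + v 1), sq_nonneg (v 0), sq_nonneg (v 1)]
  calc Real.sqrt ((2 * v 0 + 1 * v 1)^2 + (1 * v 0 + 1 * v 1)^2)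
      ≤ Real.sqrt (3^2 * ((v 0)^2 + (v 1)^2)) := Real.sqrt_le_sqrt key
  _ = 3 * Real.sqrt ((v 0)^2 + (v 1)^2) := by
      rw [Real.sqrt_mul (by norm_num), Real.sqrt_sq (by norm_num)]



section Cocycle

variable (θ : Fin 2 → ℝ)

lemma det_rotCocycle (x : FS 2) : (rotCocycle θ x).det = 1 := by
  rw [rotCocycle, Matrix.det_mul, det_hypMat, det_rotMat]; ring

lemma det_cocycleProd (n : ℕ) (x : FS 2) : (cocycleProd (rotCocycle θ) n x).det = 1 := by
  induction n generalizing x with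
  | zero => simp [cocycleProd]
  | succ n ih => rw [cocycleProd, Matrix.det_mul, ih, det_rotCocycle]; ring

lemma opNorm_one' : opNorm (1 : Matrix (Fin 2) (Fin 2) ℝ) = 1 := by
  have h1 : (1 : Matrix (Fin 2) (Fin 2) ℝ).det = 1 := Matrix.det_one
  have h2 := one_le_opNorm h1
  have h3 : opNorm (1 : Matrix (Fin 2) (Fin 2) ℝ) ≤ 1 := by
    apply opNorm_le_of zero_le_one
    intro v
    rw [Matrix.one_mulVec, one_mul]
  linarith

lemma one_le_opNorm_cp (n : ℕ) (x : FS 2) : 1 ≤ opNorm (cocycleProd (rotCocycle θ) n x) :=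
  one_le_opNorm (det_cocycleProd θ n x)

lemma opNorm_cp_pos (n : ℕ) (x : FS 2) : 0 < opNorm (cocycleProd (rotCocycle θ) n x) :=
  lt_of_lt_of_le one_pos (one_le_opNorm_cp θ n x)

lemma opNorm_factor_le (x : FS 2) : opNorm (rotCocycle θ x) ≤ 3 := by
  rw [rotCocycle]
  calc opNorm (hypMat * rotMat (θ (x 0))) ≤ opNorm hypMat * opNorm (rotMat (θ (x 0))) :=
        opNorm_mul_le _ _
  _ ≤ 3 * 1 := by
      apply mul_le_mul opNorm_hyp_le_three (opNorm_rot_le_one _) (opNorm_nonneg _) (by norm_num)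
  _ = 3 := by ring

lemma opNorm_cp_le (n : ℕ) (x : FS 2) : opNorm (cocycleProd (rotCocycle θ) n x) ≤ 3^n := by
  induction n generalizing x with
  | zero => rw [cocycleProd, opNorm_one']; norm_num
  | succ n ih =>
    rw [cocycleProd]
    calc opNorm (cocycleProd (rotCocycle θ) n (shift x) * rotCocycle θ x)
        ≤ opNorm (cocycleProd (rotCocycle θ) n (shift x)) * opNorm (rotCocycle θ x) :=
          opNorm_mul_le _ _
    _ ≤ 3^n * 3 := by
        apply mul_le_mul (ih _) (opNorm_factor_le θ x) (opNorm_nonneg _) (by positivity)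
    _ = 3^(n+1) := by rw [pow_succ]

lemma log_cp_nonneg (n : ℕ) (x : FS 2) :
    0 ≤ Real.log (opNorm (cocycleProd (rotCocycle θ) n x)) :=
  Real.log_nonneg (one_le_opNorm_cp θ n x)

lemma log_cp_le (n : ℕ) (x : FS 2) :
    Real.log (opNorm (cocycleProd (rotCocycle θ) n x)) ≤ n * Real.log 3 := by
  calc Real.log (opNorm (cocycleProd (rotCocycle θ) n x)) ≤ Real.log (3^n) := by
        apply Real.log_le_log (opNorm_cp_pos θ n x) (opNorm_cp_le θ n x)
  _ = n * Real.log 3 := by rw [Real.log_pow]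

lemma cocycleProd_congr (n : ℕ) (x z : FS 2) (h : ∀ j, j < n → x j = z j) :
    cocycleProd (rotCocycle θ) n x = cocycleProd (rotCocycle θ) n z := by
  induction n generalizing x z with
  | zero => rfl
  | succ n ih =>
    rw [cocycleProd, cocycleProd]
    have h1 := ih (shift x) (shift z) (fun j hj => h (j+1) (by omega))
    have h2 : rotCocycle θ x = rotCocycle θ z := by rw [rotCocycle, rotCocycle, h 0 (by omega)]
    rw [h1, h2]

lemma cocycleProd_add (n m : ℕ) (x : FS 2) :
    cocycleProd (rotCocycle θ) (n + m) x
      = cocycleProd (rotCocycle θ) n (shift^[m] x) * cocycleProd (rotCocycle θ) m x := by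
  induction m generalizing x with
  | zero => simp [cocycleProd]
  | succ m ih =>
    rw [show n + (m+1) = (n + m) + 1 from rfl, cocycleProd, ih (shift x), cocycleProd,
      mul_assoc, Function.iterate_succ_apply]

lemma measurable_shift : Measurable (shift (q := 2)) :=
  measurable_pi_lambda _ (fun n => measurable_pi_apply (n+1))

lemma measurable_logcp (n : ℕ) :
    Measurable (fun x : FS 2 => Real.log (opNorm (cocycleProd (rotCocycle θ) n x))) := by
  have key : (fun x : FS 2 => Real.log (opNorm (cocycleProd (rotCocycle θ) n x)))
      = (fun w : Fin n → Fin 2 => Real.log (opNorm (cocycleProd (rotCocycle θ) n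
          (fun k => if h : k < n then w ⟨k, h⟩ else 0))))
        ∘ (fun x (j : Fin n) => x (j : ℕ)) := by
    funext x
    simp only [Function.comp_apply]
    congr 2
    apply cocycleProd_congr
    intro j hj
    simp [hj]
  rw [key]
  exact (measurable_of_countable _).comp (measurable_pi_lambda _ (fun j => measurable_pi_apply _))

end Cocycle

section WithMeasure

variable (ν : Measure (FS 2)) [IsProbabilityMeasure ν] (herg : Ergodic (shift (q := 2)) ν)
variable (θ : Fin 2 → ℝ)

lemma integrable_logcp (n : ℕ) :
    Integrable (fun x : FS 2 => Real.log (opNorm (cocycleProd (rotCocycle θ) n x))) ν := by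
  apply Integrable.mono' (integrable_const ((n : ℝ) * Real.log 3))
    (measurable_logcp θ n).aestronglyMeasurable
  filter_upwards with x
  rw [Real.norm_eq_abs, abs_of_nonneg (log_cp_nonneg θ n x)]
  exact log_cp_le θ n x

def aseq (n : ℕ) : ℝ := ∫ x, Real.log (opNorm (cocycleProd (rotCocycle θ) n x)) ∂ν

lemma aseq_nonneg (n : ℕ) : 0 ≤ aseq ν θ n :=
  integral_nonneg (fun x => log_cp_nonneg θ n x)

include herg in
lemma int_comp_iterate (m : ℕ) (f : FS 2 → ℝ) (hf : Measurable f) :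
    ∫ x, f (shift^[m] x) ∂ν = ∫ x, f x ∂ν := by
  have hmp := (herg.toMeasurePreserving).iterate m
  conv_rhs => rw [← hmp.map_eq]
  rw [integral_map hmp.measurable.aemeasurable]
  rw [hmp.map_eq]
  exact hf.aestronglyMeasurable

include herg in
lemma aseq_subadd : Subadditive (aseq ν θ) := by
  intro m n
  have key : ∀ x : FS 2, Real.log (opNorm (cocycleProd (rotCocycle θ) (m + n) x))
      ≤ Real.log (opNorm (cocycleProd (rotCocycle θ) m (shift^[n] x)))
        + Real.log (opNorm (cocycleProd (rotCocycle θ) n x)) := by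
    intro x
    rw [cocycleProd_add θ m n x]
    calc Real.log (opNorm (cocycleProd (rotCocycle θ) m (shift^[n] x)
            * cocycleProd (rotCocycle θ) n x))
        ≤ Real.log (opNorm (cocycleProd (rotCocycle θ) m (shift^[n] x))
            * opNorm (cocycleProd (rotCocycle θ) n x)) := by
          apply Real.log_le_log
          · exact lt_of_lt_of_le one_pos (one_le_opNorm (by
              rw [Matrix.det_mul, det_cocycleProd, det_cocycleProd]; ring))
          · exact opNorm_mul_le _ _
    _ = _ := Real.log_mul (ne_of_gt (opNorm_cp_pos θ m _)) (ne_of_gt (opNorm_cp_pos θ n _))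
  have hint1 : Integrable (fun x : FS 2 =>
      Real.log (opNorm (cocycleProd (rotCocycle θ) m (shift^[n] x)))) ν := by
    have hmp := (herg.toMeasurePreserving).iterate n
    exact (hmp.integrable_comp (measurable_logcp θ m).aestronglyMeasurable).2
      (integrable_logcp ν θ m)
  have step : aseq ν θ (m + n) ≤ ∫ x, (Real.log (opNorm (cocycleProd (rotCocycle θ) m
      (shift^[n] x))) + Real.log (opNorm (cocycleProd (rotCocycle θ) n x))) ∂ν := by
    apply integral_mono (integrable_logcp ν θ (m+n)) (hint1.add (integrable_logcp ν θ n)) key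
  rw [integral_add hint1 (integrable_logcp ν θ n)] at step
  rw [int_comp_iterate ν herg n _ (measurable_logcp θ m)] at step
  exact step

include herg in
lemma aseq_tendsto :
    Tendsto (fun n : ℕ => aseq ν θ n / n) atTop (𝓝 ((aseq_subadd ν herg θ).lim)) := by
  apply Subadditive.tendsto_lim
  refine ⟨0, ?_⟩
  rintro y ⟨n, rfl⟩
  exact div_nonneg (aseq_nonneg ν θ n) (Nat.cast_nonneg n)

lemma lyap_eq_iInf : lyap ν θ = ⨅ n : ℕ, aseq ν θ (n+1) / ((n:ℝ)+1) := by
  rw [lyap]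
  congr 1
  funext n
  rw [aseq]
  push_cast
  ring

lemma lim_eq_lyap : (aseq_subadd ν herg θ).lim = lyap ν θ := by
  have hset : ((fun n : ℕ => aseq ν θ n / n) '' Set.Ici 1)
      = Set.range (fun m : ℕ => aseq ν θ (m+1) / ((m:ℝ)+1)) := by
    ext y
    constructor
    · rintro ⟨n, hn, rfl⟩
      rcases Nat.exists_eq_add_of_le hn with ⟨m, rfl⟩
      exact ⟨m, by push_cast; ring_nf⟩
    · rintro ⟨m, rfl⟩
      exact ⟨m + 1, by simp, by push_cast; ring_nf⟩
  rw [Subadditive.lim, lyap_eq_iInf, iInf, hset]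

include herg in
lemma part1 : Tendsto (fun n : ℕ => (1 / n : ℝ) *
      ∫ x, Real.log (opNorm (cocycleProd (rotCocycle θ) n x)) ∂ν)
    atTop (𝓝 (lyap ν θ)) := by
  have h := aseq_tendsto ν herg θ
  rw [lim_eq_lyap ν herg θ] at h
  convert h using 2 with n
  rw [aseq, one_div, inv_mul_eq_div]

end WithMeasure



section P2

variable (ν : Measure (FS 2)) [IsProbabilityMeasure ν]

lemma rotMat_zero : rotMat 0 = 1 := by
  rw [rotMat, Real.cos_zero, Real.sin_zero, Matrix.one_fin_two]
  norm_num

lemma cp_zero (n : ℕ) (x : FS 2) : cocycleProd (rotCocycle 0) n x = hypMat ^ n := by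
  induction n generalizing x with
  | zero => rw [cocycleProd, pow_zero]
  | succ n ih =>
    rw [cocycleProd, ih, rotCocycle, Pi.zero_apply, rotMat_zero, mul_one, pow_succ]

lemma bddBelow_terms (θ : Fin 2 → ℝ) : BddBelow (Set.range (fun n : ℕ => (1 / (n + 1 : ℝ)) *
    ∫ x, Real.log (opNorm (cocycleProd (rotCocycle θ) (n + 1) x)) ∂ν)) := by
  refine ⟨0, ?_⟩
  rintro y ⟨n, rfl⟩
  have : 0 ≤ ∫ x, Real.log (opNorm (cocycleProd (rotCocycle θ) (n + 1) x)) ∂ν :=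
    integral_nonneg (fun x => log_cp_nonneg θ (n+1) x)
  positivity

lemma lyap_zero : lyap ν 0 = Real.log ((3 + Real.sqrt 5) / 2) := by
  have hterm : ∀ n : ℕ, (1 / (n + 1 : ℝ)) *
      ∫ x, Real.log (opNorm (cocycleProd (rotCocycle 0) (n + 1) x)) ∂ν
      = (1 / (n + 1 : ℝ)) * Real.log (opNorm (hypMat ^ (n+1))) := by
    intro n
    congr 1
    have : (fun x : FS 2 => Real.log (opNorm (cocycleProd (rotCocycle 0) (n + 1) x)))
        = fun _ => Real.log (opNorm (hypMat ^ (n+1))) := by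
      funext x; rw [cp_zero]
    rw [this, integral_const]
    simp
  have hlam : Real.log ((3 + Real.sqrt 5) / 2) = Real.log lam := rfl
  rw [hlam, lyap]
  have hnp : ∀ n : ℕ, (0:ℝ) < (n:ℝ) + 1 := fun n => by positivity
  have hlow : ∀ n : ℕ, Real.log lam ≤ (1 / (n + 1 : ℝ)) * Real.log (opNorm (hypMat ^ (n+1))) := by
    intro n
    have h1 : ((n:ℝ)+1) * Real.log lam = Real.log (lam^(n+1)) := by
      rw [Real.log_pow]; push_cast; ring
    have h2 : Real.log (lam^(n+1)) ≤ Real.log (opNorm (hypMat ^ (n+1))) :=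
      Real.log_le_log (pow_pos lam_pos _) (le_opNorm_Mpow (n+1))
    rw [div_mul_eq_mul_div, one_mul, le_div_iff₀ (hnp n)]
    calc Real.log lam * ((n:ℝ)+1) = ((n:ℝ)+1) * Real.log lam := by ring
    _ = Real.log (lam^(n+1)) := h1
    _ ≤ _ := h2
  have hup : ∀ n : ℕ, (1 / (n + 1 : ℝ)) * Real.log (opNorm (hypMat ^ (n+1)))
      ≤ Real.log lam + Real.log 2 * (1 / (n + 1 : ℝ)) := by
    intro n
    have h2 : Real.log (opNorm (hypMat ^ (n+1))) ≤ Real.log (2 * lam^(n+1)) :=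
      Real.log_le_log (lt_of_lt_of_le (pow_pos lam_pos _) (le_opNorm_Mpow _))
        (opNorm_Mpow_le (n+1))
    have h3 : Real.log (2 * lam^(n+1)) = Real.log 2 + ((n:ℝ)+1) * Real.log lam := by
      rw [Real.log_mul (by norm_num) (ne_of_gt (pow_pos lam_pos _)), Real.log_pow]
      push_cast; ring
    rw [div_mul_eq_mul_div, one_mul, div_le_iff₀ (hnp n)]
    calc Real.log (opNorm (hypMat ^ (n+1))) ≤ Real.log 2 + ((n:ℝ)+1) * Real.log lam := by
          rw [← h3]; exact h2
    _ = (Real.log lam + Real.log 2 * (1 / ((n:ℝ) + 1))) * ((n:ℝ)+1) := by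
        field_simp; ring
  have heq : (fun n : ℕ => (1 / (n + 1 : ℝ)) *
      ∫ x, Real.log (opNorm (cocycleProd (rotCocycle 0) (n + 1) x)) ∂ν)
      = fun n : ℕ => (1 / (n + 1 : ℝ)) * Real.log (opNorm (hypMat ^ (n+1))) := funext hterm
  rw [show (⨅ n : ℕ, (1 / (n + 1 : ℝ)) *
      ∫ x, Real.log (opNorm (cocycleProd (rotCocycle 0) (n + 1) x)) ∂ν)
      = ⨅ n : ℕ, (1 / (n + 1 : ℝ)) * Real.log (opNorm (hypMat ^ (n+1))) from by rw [heq]]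
  have hbdd : BddBelow (Set.range (fun n : ℕ => (1 / (n + 1 : ℝ)) *
      Real.log (opNorm (hypMat ^ (n+1))))) := by
    refine ⟨Real.log lam, ?_⟩
    rintro y ⟨n, rfl⟩
    exact hlow n
  apply le_antisymm
  · have htend : Tendsto (fun n : ℕ => Real.log lam + Real.log 2 * (1 / (n + 1 : ℝ)))
        atTop (𝓝 (Real.log lam)) := by
      have := tendsto_one_div_add_atTop_nhds_zero_nat.const_mul (Real.log 2)
      have h2 := ((tendsto_const_nhds :
        Tendsto (fun _ : ℕ => Real.log lam) atTop (𝓝 (Real.log lam)))).add this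
      simpa using h2
    have hsq : Tendsto (fun n : ℕ => (1 / (n + 1 : ℝ)) * Real.log (opNorm (hypMat ^ (n+1))))
        atTop (𝓝 (Real.log lam)) := by
      apply tendsto_of_tendsto_of_tendsto_of_le_of_le tendsto_const_nhds htend hlow hup
    exact ge_of_tendsto' hsq (fun n => ciInf_le hbdd n)
  · exact le_ciInf hlow

end P2

section P3

variable (ν : Measure (FS 2)) [IsProbabilityMeasure ν]
variable (hsupp : ∀ U : Set (FS 2), IsOpen U → U.Nonempty → 0 < ν U)
variable (θ : Fin 2 → ℝ)

lemma cp_two (x : FS 2) : cocycleProd (rotCocycle θ) 2 x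
    = (hypMat * rotMat (θ (x 1)) * hypMat) * rotMat (θ (x 0)) := by
  show cocycleProd (rotCocycle θ) 1 (shift x) * rotCocycle θ x = _
  show (cocycleProd (rotCocycle θ) 0 (shift (shift x)) * rotCocycle θ (shift x))
      * rotCocycle θ x = _
  rw [cocycleProd, one_mul, rotCocycle, rotCocycle]
  show hypMat * rotMat (θ (x 1)) * (hypMat * rotMat (θ (x 0))) = _
  rw [mul_assoc (hypMat * rotMat (θ (x 1))) hypMat (rotMat (θ (x 0)))]

lemma log_cp_two_le (x : FS 2) : Real.log (opNorm (cocycleProd (rotCocycle θ) 2 x))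
    ≤ Real.log (opNorm (hypMat * rotMat (θ (x 1)) * hypMat)) := by
  have h1 : opNorm (cocycleProd (rotCocycle θ) 2 x)
      ≤ opNorm (hypMat * rotMat (θ (x 1)) * hypMat) := by
    rw [cp_two]
    calc opNorm ((hypMat * rotMat (θ (x 1)) * hypMat) * rotMat (θ (x 0)))
        ≤ opNorm (hypMat * rotMat (θ (x 1)) * hypMat) * opNorm (rotMat (θ (x 0))) :=
          opNorm_mul_le _ _
    _ ≤ opNorm (hypMat * rotMat (θ (x 1)) * hypMat) :=
          mul_le_of_le_one_right (opNorm_nonneg _) (opNorm_rot_le_one _)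
  exact Real.log_le_log (opNorm_cp_pos θ 2 x) h1

def FF (x : FS 2) : ℝ := Real.log (opNorm (hypMat * rotMat (θ (x 1)) * hypMat))

lemma FF_nonneg (x : FS 2) : 0 ≤ FF θ x := Real.log_nonneg (one_le_opNorm (det_MRM _))

lemma FF_le (x : FS 2) : FF θ x ≤ Real.log (lam^2) :=
  Real.log_le_log (lt_of_lt_of_le one_pos (one_le_opNorm (det_MRM _))) (opNorm_MRM_le _)

lemma FF_meas : Measurable (FF θ) := by
  have : FF θ = (fun i : Fin 2 => Real.log (opNorm (hypMat * rotMat (θ i) * hypMat)))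
      ∘ (fun x : FS 2 => x 1) := rfl
  rw [this]
  exact (measurable_of_countable _).comp (measurable_pi_apply 1)

lemma FF_integrable : Integrable (FF θ) ν := by
  apply Integrable.mono' (integrable_const (Real.log (lam^2))) (FF_meas θ).aestronglyMeasurable
  filter_upwards with x
  rw [Real.norm_eq_abs, abs_of_nonneg (FF_nonneg θ x)]
  exact FF_le θ x

lemma part3 (hsupp : ∀ U : Set (FS 2), IsOpen U → U.Nonempty → 0 < ν U) (ε : ℝ) (hε : 0 < ε) (hε1 : ε ≤ 1) (hθ : ∀ i, |θ i| ≤ ε) (hne : θ ≠ 0) :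
    lyap ν θ < Real.log ((3 + Real.sqrt 5) / 2) := by
  have hlam : Real.log ((3 + Real.sqrt 5) / 2) = Real.log lam := rfl
  rw [hlam]
  -- step 1 : lyap ≤ (1/2) * I1
  have hstep1 : lyap ν θ ≤ (1/2 : ℝ) *
      ∫ x, Real.log (opNorm (cocycleProd (rotCocycle θ) 2 x)) ∂ν := by
    have h := ciInf_le (bddBelow_terms ν θ) 1
    calc lyap ν θ ≤ (1 / ((1:ℕ) + 1 : ℝ)) *
        ∫ x, Real.log (opNorm (cocycleProd (rotCocycle θ) ((1:ℕ) + 1) x)) ∂ν := h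
    _ = (1/2 : ℝ) * ∫ x, Real.log (opNorm (cocycleProd (rotCocycle θ) 2 x)) ∂ν := by
        norm_num
  -- step 2 : I1 ≤ I2
  have hstep2 : ∫ x, Real.log (opNorm (cocycleProd (rotCocycle θ) 2 x)) ∂ν
      ≤ ∫ x, FF θ x ∂ν :=
    integral_mono (integrable_logcp ν θ 2) (FF_integrable ν θ) (log_cp_two_le θ)
  -- step 3 : I2 < log (lam^2)
  set S : Set (FS 2) := {x : FS 2 | x 1 = 0} with hSdef
  have hS : MeasurableSet S := (measurable_pi_apply 1) (measurableSet_singleton 0)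
  have hSopen : IsOpen S := by
    have e : S = (fun x : FS 2 => x 1) ⁻¹' {0} := rfl
    rw [e]
    exact (continuous_apply 1).isOpen_preimage _ (isOpen_discrete _)
  have hScopen : IsOpen Sᶜ := by
    have e : Sᶜ = (fun x : FS 2 => x 1) ⁻¹' ({0}ᶜ) := rfl
    rw [e]
    exact (continuous_apply 1).isOpen_preimage _ (isOpen_discrete _)
  have hSne : S.Nonempty := ⟨fun _ => 0, rfl⟩
  have hScne : Sᶜ.Nonempty := ⟨fun _ => 1, by simp [hSdef]⟩
  have hp : 0 < (ν S).toReal :=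
    ENNReal.toReal_pos (ne_of_gt (hsupp S hSopen hSne)) (measure_ne_top ν S)
  have hq : 0 < (ν Sᶜ).toReal :=
    ENNReal.toReal_pos (ne_of_gt (hsupp Sᶜ hScopen hScne)) (measure_ne_top ν Sᶜ)
  have hsum : (ν S).toReal + (ν Sᶜ).toReal = 1 := by
    have h1 := measure_add_measure_compl (μ := ν) hS
    rw [measure_univ] at h1
    have := congrArg ENNReal.toReal h1
    rwa [ENNReal.toReal_add (measure_ne_top ν S) (measure_ne_top ν Sᶜ), ENNReal.toReal_one]
      at this
  set h0 : ℝ := Real.log (opNorm (hypMat * rotMat (θ 0) * hypMat)) with hh0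
  set h1 : ℝ := Real.log (opNorm (hypMat * rotMat (θ 1) * hypMat)) with hh1
  have hsplit : ∫ x, FF θ x ∂ν = (ν S).toReal * h0 + (ν Sᶜ).toReal * h1 := by
    rw [← integral_add_compl hS (FF_integrable ν θ)]
    have e1 : ∫ x in S, FF θ x ∂ν = (ν S).toReal * h0 := by
      rw [setIntegral_congr_fun hS (g := fun _ => h0) (fun x hx => by
        rw [FF, hh0]; rw [Set.mem_setOf_eq] at hx; rw [hx]),
        setIntegral_const, smul_eq_mul, measureReal_def]
    have e2 : ∫ x in Sᶜ, FF θ x ∂ν = (ν Sᶜ).toReal * h1 := by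
      rw [setIntegral_congr_fun hS.compl (g := fun _ => h1) (fun x hx => by
        rw [FF, hh1]
        have : x 1 = 1 := Fin.eq_one_of_ne_zero _ (by simpa [hSdef] using hx)
        rw [this]),
        setIntegral_const, smul_eq_mul, measureReal_def]
    rw [e1, e2]
  have hb0 : h0 ≤ Real.log (lam^2) := FF_le θ (fun _ => 0)
  have hb1 : h1 ≤ Real.log (lam^2) := FF_le θ (fun _ => 1)
  obtain ⟨i, hi⟩ := Function.ne_iff.1 hne
  have hstrict : (ν S).toReal * h0 + (ν Sᶜ).toReal * h1 < Real.log (lam^2) := by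
    have hIlt : ∀ j : Fin 2, θ j ≠ 0 →
        Real.log (opNorm (hypMat * rotMat (θ j) * hypMat)) < Real.log (lam^2) := by
      intro j hj
      apply Real.log_lt_log (lt_of_lt_of_le one_pos (one_le_opNorm (det_MRM _)))
      exact opNorm_MRM_lt (cos_sq_lt_one hj (le_trans (hθ j) hε1))
    have hCsum : (ν S).toReal * Real.log (lam^2) + (ν Sᶜ).toReal * Real.log (lam^2)
        = Real.log (lam^2) := by rw [← add_mul, hsum, one_mul]
    fin_cases i
    · have t0 : h0 < Real.log (lam^2) := by rw [hh0]; exact hIlt 0 (by simpa using hi)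
      have l1 := mul_lt_mul_of_pos_left t0 hp
      have l2 := mul_le_mul_of_nonneg_left hb1 (le_of_lt hq)
      linarith
    · have t1 : h1 < Real.log (lam^2) := by rw [hh1]; exact hIlt 1 (by simpa using hi)
      have l1 := mul_lt_mul_of_pos_left t1 hq
      have l2 := mul_le_mul_of_nonneg_left hb0 (le_of_lt hp)
      linarith
  have hfin : (1/2 : ℝ) * Real.log (lam^2) = Real.log lam := by
    rw [Real.log_pow]; push_cast; ring
  calc lyap ν θ ≤ (1/2 : ℝ) * ∫ x, Real.log (opNorm (cocycleProd (rotCocycle θ) 2 x)) ∂ν :=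
        hstep1
  _ ≤ (1/2 : ℝ) * ∫ x, FF θ x ∂ν := by linarith [hstep2]
  _ = (1/2 : ℝ) * ((ν S).toReal * h0 + (ν Sᶜ).toReal * h1) := by rw [hsplit]
  _ < (1/2 : ℝ) * Real.log (lam^2) := by linarith [hstrict]
  _ = Real.log lam := hfin

end P3



/-- For the rotated hyperbolic cocycle over the full `2`-shift and a
fully supported `σ`-invariant ergodic measure `ν`: the defining limit exists and equals
the infimum, `λ_+(A_{(0,0)}, ν) = log((3+√5)/2)`, and there is `ε₀ > 0` such that
`λ_+(A_θ, ν) < λ_+(A_{(0,0)}, ν)` for every `θ ∈ [−ε,ε]² ∖ {(0,0)}` with `0 < ε ≤ ε₀`. -/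
theorem rotated_cocycle_lyapunov (ν : Measure (FS 2)) [IsProbabilityMeasure ν]
    (herg : Ergodic (shift (q := 2)) ν)
    (hsupp : ∀ U : Set (FS 2), IsOpen U → U.Nonempty → 0 < ν U) :
    (∀ θ : Fin 2 → ℝ,
      Filter.Tendsto (fun n : ℕ => (1 / n : ℝ) *
          ∫ x, Real.log (opNorm (cocycleProd (rotCocycle θ) n x)) ∂ν)
        Filter.atTop (𝓝 (lyap ν θ))) ∧
    lyap ν 0 = Real.log ((3 + Real.sqrt 5) / 2) ∧
    ∃ ε₀ > (0 : ℝ), ∀ ε : ℝ, 0 < ε → ε ≤ ε₀ → ∀ θ : Fin 2 → ℝ,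
      (∀ i, |θ i| ≤ ε) → θ ≠ 0 → lyap ν θ < lyap ν 0 := by
  refine ⟨fun θ => part1 ν herg θ, lyap_zero ν, ⟨1, one_pos, ?_⟩⟩
  intro ε hε hε1 θ hθ hne
  rw [lyap_zero ν]
  exact part3 ν θ hsupp ε hε hε1 hθ hne

end PaperBGI
end
end

section
/- Let J_1 and J_2 be two normalized Lipschitz continuous Jacobians on a transitive subshift of finite type Ω, and let μ_1 be the Gibbs (invariant) measure of log J_1, i.e. the unique σ-invariant Borel probability measure satisfying ∫ ∑_{z : σ(z)=x} J_1(z) g(z) dμ_1(x) = ∫ g dμ_1 for every continuous g. If J_1 ≠ J_2, then the relative entropy (Kullback–Leibler divergence) of μ_1 with respect to the Gibbs measure of log J_2 is strictly positive: ∫_Ω log( J_1(x) / J_2(x) ) dμ_1(x) > 0. -/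
open MeasureTheory Filter Topology

attribute [local instance] Classical.propDecidable

noncomputable section

namespace PaperBGI

/-- The Ruelle transfer operator `L_{log J}` of a Jacobian `J` on the subshift `Ω`. -/
def transferOp {q : ℕ} (Ω : Set (FS q)) (J : FS q → ℝ) (g : FS q → ℝ) (x : FS q) : ℝ :=
  ∑ i : Fin q, if cons i x ∈ Ω then J (cons i x) * g (cons i x) else 0

-- cylinders are clopen
lemma isOpen_cyl {q : ℕ} (x : FS q) (n : ℕ) : IsOpen (cyl x n) := by
  have : cyl x n = ⋂ j : Fin n, {z : FS q | z (j : ℕ) = x (j : ℕ)} := by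
    ext z; simp [cyl, Set.mem_iInter]
    constructor
    · intro h j; exact h j j.2
    · intro h j hj; exact h ⟨j, hj⟩
  rw [this]
  refine isOpen_iInter_of_finite fun j => ?_
  have : {z : FS q | z (j:ℕ) = x (j:ℕ)} = (fun z : FS q => z (j:ℕ)) ⁻¹' {x (j:ℕ)} := rfl
  rw [this]
  exact (isOpen_discrete ({x (j:ℕ)} : Set (Fin q))).preimage (continuous_apply (j : ℕ))

lemma isClosed_cyl {q : ℕ} (x : FS q) (n : ℕ) : IsClosed (cyl x n) := by
  have : cyl x n = ⋂ j : Fin n, {z : FS q | z (j : ℕ) = x (j : ℕ)} := by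
    ext z; simp [cyl, Set.mem_iInter]
    constructor
    · intro h j; exact h j j.2
    · intro h j hj; exact h ⟨j, hj⟩
  rw [this]
  refine isClosed_iInter fun j => ?_
  have : {z : FS q | z (j:ℕ) = x (j:ℕ)} = (fun z : FS q => z (j:ℕ)) ⁻¹' {x (j:ℕ)} := rfl
  rw [this]
  exact (isClosed_discrete ({x (j:ℕ)} : Set (Fin q))).preimage (continuous_apply (j : ℕ))

lemma isClosed_sft {q : ℕ} (M : Fin q → Fin q → Bool) : IsClosed (sftSet M) := by
  have : sftSet M = ⋂ n : ℕ, {z : FS q | M (z n) (z (n+1)) = true} := by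
    ext z; simp [sftSet, Set.mem_iInter]
  rw [this]
  refine isClosed_iInter fun n => ?_
  have hc : Continuous fun z : FS q => (z n, z (n+1)) :=
    (continuous_apply n).prodMk (continuous_apply (n+1))
  exact IsClosed.preimage hc (isClosed_discrete {p : Fin q × Fin q | M p.1 p.2 = true})

lemma mem_cyl_self {q : ℕ} (x : FS q) (n : ℕ) : x ∈ cyl x n := fun _ _ => rfl

-- cylinders as neighborhood basis
lemma exists_cyl_subset {q : ℕ} {U : Set (FS q)} {x : FS q} (hU : U ∈ 𝓝 x) :
    ∃ n, cyl x n ⊆ U := by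
  rw [nhds_pi] at hU
  rw [Filter.mem_pi] at hU
  obtain ⟨I, hI, t, ht, hsub⟩ := hU
  obtain ⟨n, hn⟩ := hI.bddAbove
  refine ⟨n + 1, fun z hz => hsub fun i hi => ?_⟩
  have : z i = x i := hz i (Nat.lt_succ_of_le (hn hi))
  rw [this]
  have := ht i
  rw [nhds_discrete, Filter.mem_pure] at this
  exact this

lemma sdist_le {q : ℕ} {x z : FS q} {n : ℕ} (h : z ∈ cyl x n) :
    sdist x z ≤ (1/2 : ℝ) ^ n := by
  rw [sdist]
  split
  · next hex =>
    apply pow_le_pow_of_le_one (by norm_num) (by norm_num)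
    by_contra hc
    push_neg at hc
    exact (Nat.find_spec hex) (h _ hc).symm
  · positivity

lemma lipsh_continuous {q : ℕ} {f : FS q → ℝ} (hf : LipSh f) : Continuous f := by
  obtain ⟨L, hL, hlip⟩ := hf
  rw [continuous_iff_continuousAt]
  intro x
  rw [ContinuousAt, Metric.tendsto_nhds]
  intro ε hε
  obtain ⟨n, hn⟩ : ∃ n, (1/2 : ℝ) ^ n < ε / (L + 1) :=
    exists_pow_lt_of_lt_one (by positivity) (by norm_num)
  refine Filter.eventually_of_mem ((isOpen_cyl x n).mem_nhds (mem_cyl_self x n)) fun z hz => ?_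
  have h1 : |f x - f z| ≤ L * sdist x z := hlip x z
  have h2 : sdist x z ≤ (1/2:ℝ)^n := sdist_le hz
  have h3 : L * sdist x z ≤ (L + 1) * (1/2:ℝ)^n := by
    have h0 : 0 ≤ sdist x z := by
      rw [sdist]; split <;> positivity
    nlinarith
  have h4 : (L+1) * (1/2:ℝ)^n < ε := by
    rw [← lt_div_iff₀' (by linarith)] ; exact hn
  rw [Real.dist_eq, abs_sub_comm]
  linarith

/-- transfer operator with clopen condition -/
def pOp {q : ℕ} (M : Fin q → Fin q → Bool) (J : FS q → ℝ) (g : FS q → ℝ) (x : FS q) : ℝ :=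
  ∑ i : Fin q, if M i (x 0) = true then J (cons i x) * g (cons i x) else 0

lemma cons_mem_iff {q : ℕ} {M : Fin q → Fin q → Bool} {x : FS q} (hx : x ∈ sftSet M)
    (i : Fin q) : cons i x ∈ sftSet M ↔ M i (x 0) = true := by
  constructor
  · intro h; exact h 0
  · intro h n
    cases n with
    | zero => exact h
    | succ m => exact hx m

lemma shift_mem {q : ℕ} {M : Fin q → Fin q → Bool} {x : FS q} (hx : x ∈ sftSet M) :
    shift x ∈ sftSet M := fun n => hx (n + 1)

lemma cons_shift {q : ℕ} (x : FS q) : cons (x 0) (shift x) = x := by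
  funext n; cases n <;> rfl

lemma pOp_eq_transferOp {q : ℕ} {M : Fin q → Fin q → Bool} (J g : FS q → ℝ) {x : FS q}
    (hx : x ∈ sftSet M) : pOp M J g x = transferOp (sftSet M) J g x := by
  unfold pOp transferOp
  exact Finset.sum_congr rfl fun i _ => if_congr (cons_mem_iff hx i).symm rfl rfl

lemma continuous_cons {q : ℕ} (i : Fin q) : Continuous (cons i : FS q → FS q) := by
  apply continuous_pi
  intro n
  cases n with
  | zero => exact continuous_const
  | succ m => exact continuous_apply m

lemma pOp_continuous {q : ℕ} (M : Fin q → Fin q → Bool) {J g : FS q → ℝ}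
    (hJ : Continuous J) (hg : Continuous g) : Continuous (pOp M J g) := by
  apply continuous_finset_sum
  intro i _
  have hclopen : IsClopen {x : FS q | M i (x 0) = true} := by
    have : {x : FS q | M i (x 0) = true} = (fun x : FS q => x 0) ⁻¹' {c | M i c = true} := rfl
    rw [this]
    exact ⟨(isClosed_discrete _).preimage (continuous_apply 0),
      (isOpen_discrete _).preimage (continuous_apply 0)⟩
  apply Continuous.if
  · rw [hclopen.frontier_eq]; intro a ha; exact absurd ha (Set.notMem_empty a)
  · exact (hJ.comp (continuous_cons i)).mul (hg.comp (continuous_cons i))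
  · exact continuous_const

lemma pOp_nonneg {q : ℕ} (M : Fin q → Fin q → Bool) {J g : FS q → ℝ}
    (hJ : ∀ x, 0 ≤ J x) (hg : ∀ x, 0 ≤ g x) (x : FS q) : 0 ≤ pOp M J g x := by
  apply Finset.sum_nonneg
  intro i _
  by_cases h : M i (x 0) = true
  · simp only [h, if_true]; exact mul_nonneg (hJ _) (hg _)
  · simp [h]

lemma iter_nonneg {q : ℕ} (M : Fin q → Fin q → Bool) {J : FS q → ℝ}
    (hJ : ∀ x, 0 ≤ J x) (n : ℕ) : ∀ (g : FS q → ℝ), (∀ x, 0 ≤ g x) → ∀ (x : FS q),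
    0 ≤ (pOp M J)^[n] g x := by
  induction n with
  | zero => exact fun g hg x => hg x
  | succ m ih =>
    intro g hg x
    rw [Function.iterate_succ_apply]
    exact ih (pOp M J g) (pOp_nonneg M hJ hg) x

lemma iter_continuous {q : ℕ} (M : Fin q → Fin q → Bool) {J g : FS q → ℝ}
    (hJ : Continuous J) (hg : Continuous g) (n : ℕ) : Continuous ((pOp M J)^[n] g) := by
  induction n with
  | zero => exact hg
  | succ m ih =>
    rw [Function.iterate_succ_apply']
    exact pOp_continuous M hJ ih

/-- key lower bound along an admissible word -/
lemma iter_lower {q : ℕ} (M : Fin q → Fin q → Bool) {J : FS q → ℝ} {δ : ℝ}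
    (hδ0 : 0 ≤ δ) (hδ : ∀ x, δ ≤ J x) :
    ∀ (n : ℕ) (g : FS q → ℝ), (∀ x, 0 ≤ g x) → ∀ (x z : FS q),
      (∀ j, z (j + n) = x j) → (∀ j < n, M (z j) (z (j + 1)) = true) →
      δ ^ n * g z ≤ (pOp M J)^[n] g x := by
  intro n
  induction n with
  | zero =>
    intro g hg x z hz _
    have : z = x := funext fun j => hz j
    rw [this]; simp
  | succ m ih =>
    intro g hg x z hz hadm
    rw [Function.iterate_succ_apply']
    have hx0 : z (m + 1) = x 0 := by have := hz 0; simpa using this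
    have hM : M (z m) (x 0) = true := by rw [← hx0]; exact hadm m (Nat.lt_succ_self m)
    have hz' : ∀ j, z (j + m) = cons (z m) x j := by
      intro j
      cases j with
      | zero => show z (0 + m) = z m; rw [Nat.zero_add]
      | succ k =>
        have : k + 1 + m = k + (m + 1) := by omega
        rw [this, hz k]; rfl
    have hIH : δ ^ m * g z ≤ (pOp M J)^[m] g (cons (z m) x) :=
      ih g hg (cons (z m) x) z hz' (fun j hj => hadm j (Nat.lt_succ_of_lt hj))
    have hterm : J (cons (z m) x) * (pOp M J)^[m] g (cons (z m) x) ≤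
        pOp M J ((pOp M J)^[m] g) x := by
      rw [pOp]
      have := Finset.single_le_sum (f := fun i : Fin q =>
        if M i (x 0) = true then J (cons i x) * (pOp M J)^[m] g (cons i x) else 0)
        (fun i _ => by
          by_cases h : M i (x 0) = true
          · simp only [h, if_true]
            exact mul_nonneg (le_trans hδ0 (hδ _))
              (iter_nonneg M (fun y => le_trans hδ0 (hδ y)) m g hg _)
          · simp [h])
        (Finset.mem_univ (z m))
      simpa [hM] using this
    calc δ ^ (m + 1) * g z = δ * (δ ^ m * g z) := by ring
    _ ≤ J (cons (z m) x) * (pOp M J)^[m] g (cons (z m) x) := by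
        apply mul_le_mul (hδ _) hIH
        · exact mul_nonneg (pow_nonneg hδ0 m) (hg z)
        · exact le_trans hδ0 (hδ _)
    _ ≤ pOp M J ((pOp M J)^[m] g) x := hterm

lemma exists_connect {q : ℕ} {M : Fin q → Fin q → Bool} (hirr : IsIrreducible M)
    {y : FS q} (hy : y ∈ sftSet M) {m : ℕ} (hm : 1 ≤ m) (c : Fin q) :
    ∃ N : ℕ, ∀ x ∈ sftSet M, x 0 = c →
      ∃ z : FS q, (∀ j, z (j + N) = x j) ∧ (∀ j < N, M (z j) (z (j + 1)) = true) ∧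
        z ∈ cyl y m := by
  obtain ⟨n', hn', p, hp0, hpn, hpt⟩ := hirr (y (m - 1)) c
  refine ⟨(m - 1) + n', ?_⟩
  intro x hx hx0
  set N := (m - 1) + n' with hNdef
  set z : FS q := fun j => if j < N then (if j < m then y j else p (j - (m - 1))) else x (j - N)
    with hzdef
  have hmN : m ≤ N := by omega
  have hzp : ∀ j, m - 1 ≤ j → j ≤ N → z j = p (j - (m - 1)) := by
    intro j h1 h2
    rw [hzdef]
    dsimp only
    by_cases hjN : j < N
    · rw [if_pos hjN]
      by_cases hjm : j < m
      · have hj : j = m - 1 := by omega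
        rw [if_pos hjm, hj]
        have h5 : m - 1 - (m - 1) = 0 := by omega
        rw [h5, hp0]
      · rw [if_neg hjm]
    · have hj : j = N := by omega
      rw [if_neg hjN, hj]
      have h3 : N - N = 0 := by omega
      have h4 : N - (m - 1) = n' := by omega
      rw [h3, h4, hpn, hx0]
  refine ⟨z, ?_, ?_, ?_⟩
  · intro j
    rw [hzdef]; dsimp only
    rw [if_neg (by omega)]
    congr 1; omega
  · intro j hj
    by_cases hjm : j + 1 < m
    · have e1 : z j = y j := by rw [hzdef]; dsimp only; rw [if_pos (by omega), if_pos (by omega)]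
      have e2 : z (j + 1) = y (j + 1) := by
        rw [hzdef]; dsimp only; rw [if_pos (by omega), if_pos hjm]
      rw [e1, e2]; exact hy j
    · have e1 : z j = p (j - (m - 1)) := hzp j (by omega) (by omega)
      have e2 : z (j + 1) = p (j + 1 - (m - 1)) := hzp (j + 1) (by omega) (by omega)
      have e3 : j + 1 - (m - 1) = (j - (m - 1)) + 1 := by omega
      rw [e1, e2, e3]
      exact hpt _ (by omega)
  · intro j hjm
    rw [hzdef]; dsimp only
    rw [if_pos (by omega), if_pos hjm]


/-- If `J₁, J₂` are normalized Lipschitz Jacobians on a transitive SFT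
`Ω` and `μ₁` is the (unique, invariant) Gibbs measure of `log J₁`, i.e. the fixed point of
the dual transfer operator, then `J₁ ≠ J₂` implies that the relative entropy
`∫ log (J₁/J₂) dμ₁` is strictly positive. -/
theorem relative_entropy_positive {q : ℕ}
    (M : Fin q → Fin q → Bool) (hirr : IsIrreducible M)
    (J₁ J₂ : FS q → ℝ)
    (hlip₁ : LipSh fun x => Real.log (J₁ x)) (hlip₂ : LipSh fun x => Real.log (J₂ x))
    (hnorm₁ : Normalized (sftSet M) J₁) (hnorm₂ : Normalized (sftSet M) J₂)
    (μ₁ : Measure (FS q)) [IsProbabilityMeasure μ₁]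
    (hinv : μ₁.map shift = μ₁) (hsupp : μ₁ (sftSet M) = 1)
    (hfix : ∀ g : FS q → ℝ, Continuous g →
      ∫ x, transferOp (sftSet M) J₁ g x ∂μ₁ = ∫ x, g x ∂μ₁)
    (huniq : ∀ ν : Measure (FS q), IsProbabilityMeasure ν → ν.map shift = ν →
      ν (sftSet M) = 1 →
      (∀ g : FS q → ℝ, Continuous g →
        ∫ x, transferOp (sftSet M) J₁ g x ∂ν = ∫ x, g x ∂ν) → ν = μ₁)
    (hne : ∃ x ∈ sftSet M, J₁ x ≠ J₂ x) :
    0 < ∫ x, Real.log (J₁ x / J₂ x) ∂μ₁ := by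
  classical
  obtain ⟨x₀, hx₀Ω, hx₀ne⟩ := hne
  have hΩmeas : MeasurableSet (sftSet M) := (isClosed_sft M).measurableSet
  have hΩc : μ₁ (sftSet M)ᶜ = 0 := by
    have h := measure_compl hΩmeas (measure_ne_top μ₁ _)
    rw [hsupp, measure_univ] at h
    simpa using h
  have haeΩ : ∀ᵐ x ∂μ₁, x ∈ sftSet M := by
    rw [MeasureTheory.ae_iff]
    exact hΩc
  have hJ1pos := hnorm₁.1
  have hJ2pos := hnorm₂.1
  have hJ1c : Continuous J₁ := by
    have h : J₁ = fun x => Real.exp (Real.log (J₁ x)) :=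
      funext fun x => (Real.exp_log (hJ1pos x)).symm
    rw [h]; exact Real.continuous_exp.comp (lipsh_continuous hlip₁)
  have hlogc : Continuous fun x => Real.log (J₂ x) - Real.log (J₁ x) :=
    (lipsh_continuous hlip₂).sub (lipsh_continuous hlip₁)
  set f : FS q → ℝ := fun x => Real.log (J₂ x) - Real.log (J₁ x) with hfdef
  have intg : ∀ {h : FS q → ℝ}, Continuous h → Integrable h μ₁ := fun hc =>
    hc.integrable_of_hasCompactSupport (HasCompactSupport.of_compactSpace _)
  have int_eq : ∀ h : FS q → ℝ, Continuous h →
      ∫ x, pOp M J₁ h x ∂μ₁ = ∫ x, h x ∂μ₁ := by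
    intro h hc
    rw [← hfix h hc]
    apply integral_congr_ae
    filter_upwards [haeΩ] with x hx
    exact pOp_eq_transferOp J₁ h hx
  have iter_int : ∀ (n : ℕ) (h : FS q → ℝ), Continuous h →
      ∫ x, (pOp M J₁)^[n] h x ∂μ₁ = ∫ x, h x ∂μ₁ := by
    intro n
    induction n with
    | zero => intro h _; simp
    | succ k ih =>
      intro h hc
      simp only [Function.iterate_succ_apply']
      rw [int_eq _ (iter_continuous M hJ1c hc k), ih h hc]
  obtain ⟨xm, -, hmin⟩ := isCompact_univ.exists_isMinOn ⟨x₀, Set.mem_univ _⟩ hJ1c.continuousOn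
  set δ := J₁ xm with hδdef
  have hδpos : 0 < δ := hJ1pos xm
  have hδle : ∀ x, δ ≤ J₁ x := fun x => hmin (Set.mem_univ x)
  -- positivity of cylinder measure
  have cylpos : ∀ y ∈ sftSet M, ∀ m : ℕ, 1 ≤ m → 0 < (μ₁ (cyl y m)).toReal := by
    intro y hy m hm
    obtain ⟨c, hc⟩ : ∃ c : Fin q, μ₁ {x : FS q | x 0 = c} ≠ 0 := by
      by_contra hcon
      push_neg at hcon
      have h1 : μ₁ (⋃ c : Fin q, {x : FS q | x 0 = c}) = 0 := measure_iUnion_null hcon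
      have h2 : (⋃ c : Fin q, {x : FS q | x 0 = c}) = Set.univ := by
        ext x; simp
      rw [h2, measure_univ] at h1
      exact one_ne_zero h1
    obtain ⟨N, hN⟩ := exists_connect hirr hy hm c
    set g : FS q → ℝ := fun x => if x ∈ cyl y m then (1 : ℝ) else 0 with hgdef
    have hgind : g = Set.indicator (cyl y m) (fun _ => (1 : ℝ)) := by
      funext x; rw [Set.indicator_apply]
    have hCm : MeasurableSet (cyl y m) := (isClosed_cyl y m).measurableSet
    have hgc : Continuous g := by
      apply Continuous.if
      · rw [Set.setOf_mem_eq, IsClopen.frontier_eq ⟨isClosed_cyl y m, isOpen_cyl y m⟩]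
        exact fun a ha => absurd ha (Set.notMem_empty a)
      · exact continuous_const
      · exact continuous_const
    have hg0 : ∀ x, 0 ≤ g x := by
      intro x; rw [hgdef]; dsimp only; split <;> norm_num
    set A : Set (FS q) := {x : FS q | x 0 = c} ∩ sftSet M with hAdef
    have hSm : MeasurableSet {x : FS q | x 0 = c} := by
      have hpre : {x : FS q | x 0 = c} = (fun x : FS q => x 0) ⁻¹' {c} := rfl
      rw [hpre]
      exact (measurable_pi_apply 0) (measurableSet_singleton c)
    have hAmeas : MeasurableSet A := hSm.inter hΩmeas
    have hAμ : μ₁ A ≠ 0 := by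
      intro h0
      apply hc
      have hle := measure_le_inter_add_diff μ₁ {x : FS q | x 0 = c} (sftSet M)
      have hd : μ₁ ({x : FS q | x 0 = c} \ sftSet M) = 0 :=
        measure_mono_null (fun x hx => hx.2) hΩc
      rw [← hAdef] at hle
      rw [h0, hd, add_zero] at hle
      exact le_antisymm hle zero_le
    have hptwise : ∀ x, Set.indicator A (fun _ => δ ^ N) x ≤ (pOp M J₁)^[N] g x := by
      intro x
      by_cases hxA : x ∈ A
      · rw [Set.indicator_of_mem hxA]
        obtain ⟨z, hz1, hz2, hz3⟩ := hN x hxA.2 hxA.1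
        have hlow := iter_lower M (le_of_lt hδpos) hδle N g hg0 x z hz1 hz2
        have hgz : g z = 1 := by rw [hgdef]; simp [hz3]
        rw [hgz, mul_one] at hlow
        exact hlow
      · rw [Set.indicator_of_notMem hxA]
        exact iter_nonneg M (fun v => le_of_lt (hJ1pos v)) N g hg0 x
    have hint1 : ∫ x, Set.indicator A (fun _ => δ ^ N) x ∂μ₁ = (μ₁ A).toReal • (δ ^ N) :=
      integral_indicator_const _ hAmeas
    have hint2 : ∫ x, g x ∂μ₁ = (μ₁ (cyl y m)).toReal • (1 : ℝ) := by
      rw [hgind]; exact integral_indicator_const _ hCm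
    have hmono := integral_mono ((integrable_const (δ ^ N)).indicator hAmeas)
      (intg (iter_continuous M hJ1c hgc N)) hptwise
    have hiter := iter_int N g hgc
    have hA0 : 0 < (μ₁ A).toReal := ENNReal.toReal_pos hAμ (measure_ne_top _ _)
    rw [hint1] at hmono
    rw [hiter, hint2] at hmono
    simp only [smul_eq_mul, mul_one] at hmono
    nlinarith [pow_pos hδpos N]
  -- pointwise estimate for the transfer operator of f
  have termle : ∀ (x : FS q) (i : Fin q),
      (if M i (x 0) = true then J₁ (cons i x) * f (cons i x) else 0) ≤
        (if M i (x 0) = true then J₂ (cons i x) - J₁ (cons i x) else 0) := by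
    intro x i
    by_cases h : M i (x 0) = true
    · rw [if_pos h, if_pos h]
      have h1 : 0 < J₁ (cons i x) := hJ1pos _
      have h2 : 0 < J₂ (cons i x) := hJ2pos _
      have hlog : f (cons i x) = Real.log (J₂ (cons i x) / J₁ (cons i x)) := by
        rw [hfdef]; dsimp only; rw [Real.log_div (ne_of_gt h2) (ne_of_gt h1)]
      have hle : Real.log (J₂ (cons i x) / J₁ (cons i x)) ≤ J₂ (cons i x) / J₁ (cons i x) - 1 :=
        Real.log_le_sub_one_of_pos (by positivity)
      rw [hlog]
      calc J₁ (cons i x) * Real.log (J₂ (cons i x) / J₁ (cons i x))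
          ≤ J₁ (cons i x) * (J₂ (cons i x) / J₁ (cons i x) - 1) :=
            mul_le_mul_of_nonneg_left hle (le_of_lt h1)
        _ = J₂ (cons i x) - J₁ (cons i x) := by field_simp
    · rw [if_neg h, if_neg h]
  have sumzero : ∀ x ∈ sftSet M,
      ∑ i : Fin q, (if M i (x 0) = true then J₂ (cons i x) - J₁ (cons i x) else 0) = 0 := by
    intro x hx
    have e : ∀ i : Fin q,
        (if M i (x 0) = true then J₂ (cons i x) - J₁ (cons i x) else 0) =
          (if cons i x ∈ sftSet M then J₂ (cons i x) else 0) -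
            (if cons i x ∈ sftSet M then J₁ (cons i x) else 0) := by
      intro i
      by_cases h : cons i x ∈ sftSet M
      · rw [if_pos h, if_pos h, if_pos ((cons_mem_iff hx i).mp h)]
      · rw [if_neg h, if_neg h, if_neg (fun hM => h ((cons_mem_iff hx i).mpr hM))]
        ring
    rw [Finset.sum_congr rfl (fun i _ => e i), Finset.sum_sub_distrib,
      hnorm₂.2 x hx, hnorm₁.2 x hx, sub_self]
  have hFc : Continuous (pOp M J₁ f) := pOp_continuous M hJ1c hlogc
  have hFle : ∀ x ∈ sftSet M, pOp M J₁ f x ≤ 0 := by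
    intro x hx
    calc pOp M J₁ f x
        ≤ ∑ i : Fin q, (if M i (x 0) = true then J₂ (cons i x) - J₁ (cons i x) else 0) :=
          Finset.sum_le_sum fun i _ => termle x i
      _ = 0 := sumzero x hx
  have hy₀ : shift x₀ ∈ sftSet M := shift_mem hx₀Ω
  have hFlt : pOp M J₁ f (shift x₀) < 0 := by
    have hM : M (x₀ 0) ((shift x₀) 0) = true := hx₀Ω 0
    have hstrict : (if M (x₀ 0) ((shift x₀) 0) = true then
          J₁ (cons (x₀ 0) (shift x₀)) * f (cons (x₀ 0) (shift x₀)) else 0) <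
        (if M (x₀ 0) ((shift x₀) 0) = true then
          J₂ (cons (x₀ 0) (shift x₀)) - J₁ (cons (x₀ 0) (shift x₀)) else 0) := by
      rw [if_pos hM, if_pos hM, cons_shift]
      have h1 : 0 < J₁ x₀ := hJ1pos x₀
      have h2 : 0 < J₂ x₀ := hJ2pos x₀
      have hne1 : J₂ x₀ / J₁ x₀ ≠ 1 := by
        intro h
        exact hx₀ne ((div_eq_one_iff_eq (ne_of_gt h1)).mp h).symm
      have hlt : Real.log (J₂ x₀ / J₁ x₀) < J₂ x₀ / J₁ x₀ - 1 :=
        Real.log_lt_sub_one_of_pos (by positivity) hne1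
      have hlog : f x₀ = Real.log (J₂ x₀ / J₁ x₀) := by
        rw [hfdef]; dsimp only; rw [Real.log_div (ne_of_gt h2) (ne_of_gt h1)]
      rw [hlog]
      calc J₁ x₀ * Real.log (J₂ x₀ / J₁ x₀) < J₁ x₀ * (J₂ x₀ / J₁ x₀ - 1) :=
            mul_lt_mul_of_pos_left hlt h1
        _ = J₂ x₀ - J₁ x₀ := by field_simp
    have hsum := Finset.sum_lt_sum (fun i (_ : i ∈ Finset.univ) => termle (shift x₀) i)
      ⟨x₀ 0, Finset.mem_univ _, hstrict⟩
    calc pOp M J₁ f (shift x₀) < _ := hsum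
      _ = 0 := sumzero _ hy₀
  set ε := -pOp M J₁ f (shift x₀) / 2 with hεdef
  have hε : 0 < ε := by rw [hεdef]; linarith
  have hUopen : IsOpen {z : FS q | pOp M J₁ f z < -ε} := isOpen_lt hFc continuous_const
  have hy₀U : shift x₀ ∈ {z : FS q | pOp M J₁ f z < -ε} := by
    show pOp M J₁ f (shift x₀) < -ε
    rw [hεdef]; linarith
  obtain ⟨m₀, hm₀⟩ := exists_cyl_subset (hUopen.mem_nhds hy₀U)
  have hCsub : cyl (shift x₀) (max m₀ 1) ⊆ {z : FS q | pOp M J₁ f z < -ε} :=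
    fun z hz => hm₀ fun j hj => hz j (lt_of_lt_of_le hj (le_max_left _ _))
  have hCpos := cylpos (shift x₀) hy₀ (max m₀ 1) (le_max_right _ _)
  have hCmeas : MeasurableSet (cyl (shift x₀) (max m₀ 1)) := (isClosed_cyl _ _).measurableSet
  have hψint : Integrable (Set.indicator (cyl (shift x₀) (max m₀ 1)) fun _ => -ε) μ₁ :=
    (integrable_const (-ε)).indicator hCmeas
  have hFψ : ∀ᵐ x ∂μ₁, pOp M J₁ f x ≤
      Set.indicator (cyl (shift x₀) (max m₀ 1)) (fun _ => -ε) x := by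
    filter_upwards [haeΩ] with x hx
    by_cases hxC : x ∈ cyl (shift x₀) (max m₀ 1)
    · rw [Set.indicator_of_mem hxC]; exact le_of_lt (hCsub hxC)
    · rw [Set.indicator_of_notMem hxC]; exact hFle x hx
  have hint3 : ∫ x, pOp M J₁ f x ∂μ₁ ≤ (μ₁ (cyl (shift x₀) (max m₀ 1))).toReal • (-ε) := by
    rw [← measureReal_def, ← integral_indicator_const (-ε) hCmeas]
    exact integral_mono_ae (intg hFc) hψint hFψ
  have hFf : ∫ x, pOp M J₁ f x ∂μ₁ = ∫ x, f x ∂μ₁ := int_eq f hlogc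
  have hneg : ∫ x, f x ∂μ₁ < 0 := by
    rw [← hFf]
    have hsm : (μ₁ (cyl (shift x₀) (max m₀ 1))).toReal • (-ε) < 0 := by
      rw [smul_eq_mul]; nlinarith
    linarith
  have hrw : (fun x => Real.log (J₁ x / J₂ x)) = fun x => -f x := by
    funext x
    rw [hfdef]; dsimp only
    rw [Real.log_div (ne_of_gt (hJ1pos x)) (ne_of_gt (hJ2pos x))]
    ring
  rw [hrw, integral_neg]
  linarith


end PaperBGI
end
end
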